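/- (Proposition 3: log-concavity of volume in the UTPD parameterization) Let G1, G2 ∈ ℝ^{d×d} both be upper triangular with strictly positive diagonal entries, and let θ ∈ [0,1]. Then for any center c ∈ ℝ^d, the Lebesgue measure of the zonotope with generator matrix θ·G1 + (1−θ)·G2 satisfies vol(Z(c, θ·G1 + (1−θ)·G2)) ≥ vol(Z(c, G1))^θ · vol(Z(c, G2))^{1−θ}. -/
import Mathlib

open MeasureTheory
open Pointwise

/-- The zonotope with center `c` and generator matrix `G`. -/
def zonotope {d p : ℕ} (c : Fin d → ℝ) (G : Matrix (Fin d) (Fin p) ℝ) : Set (Fin d → ℝ) :=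
  {x | ∃ lam : Fin p → ℝ, (∀ i, |lam i| ≤ 1) ∧ x = c + G.mulVec lam}

lemma zonotope_volume (d : ℕ) (c : Fin d → ℝ) (G : Matrix (Fin d) (Fin d) ℝ) :
    volume (zonotope c G) = ENNReal.ofReal |G.det| * 2 ^ d := by
  have hset : zonotope c G
      = c +ᵥ (Matrix.toLin' G '' (Set.pi Set.univ fun _ => Set.Icc (-1:ℝ) 1)) := by
    ext x
    simp only [zonotope, Set.mem_setOf_eq, Set.mem_vadd_set, Set.mem_image,
      Set.mem_pi, Set.mem_univ, Set.mem_Icc, forall_true_left]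
    constructor
    · rintro ⟨lam, h1, rfl⟩
      exact ⟨G.mulVec lam, ⟨lam, fun i => abs_le.mp (h1 i), rfl⟩, rfl⟩
    · rintro ⟨y, ⟨lam, h1, rfl⟩, rfl⟩
      exact ⟨lam, fun i => abs_le.mpr (h1 i), rfl⟩
  rw [hset, measure_vadd, Measure.addHaar_image_linearMap, LinearMap.det_toLin',
    volume_pi_pi]
  simp [Real.volume_Icc]
  norm_num

/-- Proposition 3: log-concavity of the zonotope volume in the UTPD parameterization.
For upper triangular matrices `G1, G2` with strictly positive diagonals and `θ ∈ [0,1]`,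
`vol(Z(c, θ G1 + (1−θ) G2)) ≥ vol(Z(c,G1))^θ · vol(Z(c,G2))^(1−θ)`. -/
theorem utpd_volume_log_concave (d : ℕ) (c : Fin d → ℝ)
    (G1 G2 : Matrix (Fin d) (Fin d) ℝ)
    (hut1 : ∀ i j : Fin d, j < i → G1 i j = 0) (hdiag1 : ∀ i : Fin d, 0 < G1 i i)
    (hut2 : ∀ i j : Fin d, j < i → G2 i j = 0) (hdiag2 : ∀ i : Fin d, 0 < G2 i i)
    (θ : ℝ) (hθ0 : 0 ≤ θ) (hθ1 : θ ≤ 1) :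
    volume (zonotope c (θ • G1 + (1 - θ) • G2))
      ≥ volume (zonotope c G1) ^ θ * volume (zonotope c G2) ^ (1 - θ) := by
  set G3 : Matrix (Fin d) (Fin d) ℝ := θ • G1 + (1 - θ) • G2 with hG3
  have hθ0' : (0:ℝ) ≤ 1 - θ := by linarith
  -- determinants
  have hdet1 : G1.det = ∏ i, G1 i i :=
    Matrix.det_of_upperTriangular (fun i j h => hut1 i j h)
  have hdet2 : G2.det = ∏ i, G2 i i :=
    Matrix.det_of_upperTriangular (fun i j h => hut2 i j h)
  have hdet3 : G3.det = ∏ i, G3 i i := by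
    refine Matrix.det_of_upperTriangular (fun i j h => ?_)
    simp [hG3, hut1 i j h, hut2 i j h]
  have hdiag3 : ∀ i, 0 < G3 i i := by
    intro i
    have := hdiag1 i; have := hdiag2 i
    rcases lt_or_eq_of_le hθ0 with h | h
    · have : 0 < θ * G1 i i := by positivity
      have h2 : 0 ≤ (1 - θ) * G2 i i := by positivity
      simp only [hG3, Matrix.add_apply, Matrix.smul_apply, smul_eq_mul]
      linarith
    · have h1 : 0 < (1 - θ) * G2 i i := by
        have : 1 - θ = 1 := by linarith
        rw [this]; simpa using hdiag2 i
      have h2 : 0 ≤ θ * G1 i i := by positivity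
      simp only [hG3, Matrix.add_apply, Matrix.smul_apply, smul_eq_mul]
      linarith
  have hP1 : (0:ℝ) < ∏ i, G1 i i := Finset.prod_pos fun i _ => hdiag1 i
  have hP2 : (0:ℝ) < ∏ i, G2 i i := Finset.prod_pos fun i _ => hdiag2 i
  have hP3 : (0:ℝ) < ∏ i, G3 i i := Finset.prod_pos fun i _ => hdiag3 i
  rw [zonotope_volume, zonotope_volume, zonotope_volume, hdet1, hdet2, hdet3,
    abs_of_pos hP1, abs_of_pos hP2, abs_of_pos hP3]
  -- reduce to a real inequality
  have key : (∏ i, G1 i i) ^ θ * (∏ i, G2 i i) ^ (1 - θ) ≤ ∏ i, G3 i i := by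
    calc (∏ i, G1 i i) ^ θ * (∏ i, G2 i i) ^ (1 - θ)
        = ∏ i, (G1 i i) ^ θ * (G2 i i) ^ (1 - θ) := by
          rw [← Real.finset_prod_rpow _ _ (fun i _ => (hdiag1 i).le),
            ← Real.finset_prod_rpow _ _ (fun i _ => (hdiag2 i).le),
            ← Finset.prod_mul_distrib]
      _ ≤ ∏ i, G3 i i := by
          refine Finset.prod_le_prod (fun i _ => mul_nonneg
            (Real.rpow_nonneg (hdiag1 i).le _) (Real.rpow_nonneg (hdiag2 i).le _))
            (fun i _ => ?_)
          have := Real.geom_mean_le_arith_mean2_weighted hθ0 hθ0'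
            (hdiag1 i).le (hdiag2 i).le (by ring)
          simpa [hG3, Matrix.add_apply, Matrix.smul_apply, smul_eq_mul] using this
  have h2d : ((2:ENNReal) ^ d) ^ θ * ((2:ENNReal) ^ d) ^ (1 - θ) = (2:ENNReal) ^ d := by
    rw [← ENNReal.rpow_add _ _ (by positivity) (by simp)]
    norm_num
  calc (ENNReal.ofReal (∏ i, G1 i i) * 2 ^ d) ^ θ *
        (ENNReal.ofReal (∏ i, G2 i i) * 2 ^ d) ^ (1 - θ)
      = ENNReal.ofReal ((∏ i, G1 i i) ^ θ) * ENNReal.ofReal ((∏ i, G2 i i) ^ (1 - θ)) *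
        (((2:ENNReal) ^ d) ^ θ * ((2:ENNReal) ^ d) ^ (1 - θ)) := by
        rw [ENNReal.mul_rpow_of_nonneg _ _ hθ0, ENNReal.mul_rpow_of_nonneg _ _ hθ0',
          ENNReal.ofReal_rpow_of_pos hP1, ENNReal.ofReal_rpow_of_pos hP2]
        ring
    _ = ENNReal.ofReal ((∏ i, G1 i i) ^ θ * (∏ i, G2 i i) ^ (1 - θ)) * 2 ^ d := by
        rw [h2d, ENNReal.ofReal_mul (Real.rpow_nonneg hP1.le _)]
    _ ≤ ENNReal.ofReal (∏ i, G3 i i) * 2 ^ d :=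
        mul_le_mul_left (ENNReal.ofReal_le_ofReal key) _
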